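/- Let H₀ ∈ B(𝓗) be self-adjoint with spectrum contained in [1+γ₀,∞) for some γ₀ > 0, and let H₁ ∈ B(𝓗). Then for every real z < 1 the operator H₀ − z·1 is invertible and ‖H₁·(H₀ − z·1)⁻¹‖ ≤ ((3γ₀ + 1)/γ₀) · ‖H₁·H₀⁻¹‖. -/

import Mathlib

open MeasureTheory
set_option synthInstance.maxHeartbeats 1000000
set_option maxHeartbeats 1000000

variable {𝓗 : Type*} [NormedAddCommGroup 𝓗] [InnerProductSpace ℂ 𝓗] [CompleteSpace 𝓗]

/-- Auxiliary: a self-adjoint element of a C*-algebra whose real spectrum lies in `[m, ∞)`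
with `m > 0` is invertible and its inverse has norm at most `m⁻¹`. -/
lemma aux_inv_norm_le {A : Type*} [CStarAlgebra A] {b : A} (hb : IsSelfAdjoint b)
    {m : ℝ} (hm : 0 < m) (hs : spectrum ℝ b ⊆ Set.Ici m) :
    IsUnit b ∧ ‖Ring.inverse b‖ ≤ m⁻¹ := by
  have hub : IsUnit b := by
    refine (spectrum.zero_notMem_iff ℝ).mp fun h => ?_
    have := hs h
    simp only [Set.mem_Ici] at this
    linarith
  refine ⟨hub, ?_⟩
  have hinv_sa : IsSelfAdjoint (Ring.inverse b) := by
    rw [isSelfAdjoint_iff, ← Ring.inverse_star, hb.star_eq]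
  have hspec_inv : spectrum ℝ (Ring.inverse b) = (spectrum ℝ b)⁻¹ := by
    have h1 : Ring.inverse b = ((hub.unit⁻¹ : (Units A)) : A) := by
      rw [← Ring.inverse_unit hub.unit, IsUnit.unit_spec]
    rw [h1, ← spectrum.map_inv, IsUnit.unit_spec]
  have hrad : spectralRadius ℝ (Ring.inverse b) ≤ ENNReal.ofReal m⁻¹ := by
    refine iSup₂_le fun k hk => ?_
    rw [hspec_inv, Set.mem_inv] at hk
    have hk' := hs hk
    simp only [Set.mem_Ici] at hk'
    have hkpos : 0 < k := inv_pos.mp (lt_of_lt_of_le hm hk')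
    have hkle : k ≤ m⁻¹ := by
      rw [← inv_inv k]
      exact inv_anti₀ hm hk'
    rw [show ((‖k‖₊ : NNReal) : ENNReal) = ENNReal.ofReal ‖k‖ from (ENNReal.ofReal_eq_coe_nnreal (norm_nonneg k)).symm]
    exact ENNReal.ofReal_le_ofReal (by rw [Real.norm_eq_abs, abs_of_pos hkpos]; exact hkle)
  have := hinv_sa.toReal_spectralRadius_eq_norm
  rw [← this]
  calc (spectralRadius ℝ (Ring.inverse b)).toReal
      ≤ (ENNReal.ofReal m⁻¹).toReal := ENNReal.toReal_mono ENNReal.ofReal_ne_top hrad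
    _ = m⁻¹ := ENNReal.toReal_ofReal (by positivity)

/-- For self-adjoint `H₀` with spectrum in `[1+γ₀,∞)`, `γ₀ > 0`, and any `H₁`:
for every real `z < 1` the operator `H₀ − z·1` is invertible and
`‖H₁·(H₀ − z·1)⁻¹‖ ≤ ((3γ₀ + 1)/γ₀) · ‖H₁·H₀⁻¹‖`. -/
theorem stmt_5 (H₀ H₁ : 𝓗 →L[ℂ] 𝓗) (hH₀ : IsSelfAdjoint H₀) (γ₀ : ℝ) (hγ₀ : 0 < γ₀)
    (hspec : spectrum ℝ H₀ ⊆ Set.Ici (1 + γ₀)) (z : ℝ) (hz : z < 1) :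
    IsUnit (H₀ - z • (1 : 𝓗 →L[ℂ] 𝓗)) ∧
    ‖H₁ * Ring.inverse (H₀ - z • (1 : 𝓗 →L[ℂ] 𝓗))‖ ≤
      ((3 * γ₀ + 1) / γ₀) * ‖H₁ * Ring.inverse H₀‖ := by
  set B : 𝓗 →L[ℂ] 𝓗 := H₀ - z • (1 : 𝓗 →L[ℂ] 𝓗) with hBdef
  have hBsa : IsSelfAdjoint B := by
    refine hH₀.sub ?_
    rw [isSelfAdjoint_iff]
    simp [star_smul]
  have hspecB : spectrum ℝ B ⊆ Set.Ici (1 + γ₀ - z) := by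
    have h1 : B = H₀ - algebraMap ℝ (𝓗 →L[ℂ] 𝓗) z := by
      rw [hBdef, Algebra.algebraMap_eq_smul_one]
    rw [h1, ← spectrum.sub_singleton_eq]
    rintro x ⟨a, ha, b, hb, rfl⟩
    simp only [Set.mem_singleton_iff] at hb
    subst hb
    have := hspec ha
    simp only [Set.mem_Ici] at this ⊢
    linarith
  have hmB : (0 : ℝ) < 1 + γ₀ - z := by linarith
  obtain ⟨hBu, hBnorm⟩ := aux_inv_norm_le hBsa hmB hspecB
  obtain ⟨hH₀u, _⟩ := aux_inv_norm_le hH₀ (show (0:ℝ) < 1 + γ₀ by linarith) hspec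
  refine ⟨hBu, ?_⟩
  have hiH₀ : Ring.inverse H₀ * H₀ = 1 := Ring.inverse_mul_cancel H₀ hH₀u
  have hBiB : B * Ring.inverse B = 1 := Ring.mul_inverse_cancel B hBu
  have hkey : H₁ * Ring.inverse B =
      (H₁ * Ring.inverse H₀) * (H₀ * Ring.inverse B) := by
    rw [mul_assoc H₁, ← mul_assoc (Ring.inverse H₀), hiH₀, one_mul]
  have hHB : H₀ * Ring.inverse B = 1 + z • Ring.inverse B := by
    have : H₀ = B + z • (1 : 𝓗 →L[ℂ] 𝓗) := by rw [hBdef]; abel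
    rw [this, add_mul, hBiB, smul_mul_assoc, one_mul]
  have hnormHB : ‖H₀ * Ring.inverse B‖ ≤ 1 + |z| * (1 + γ₀ - z)⁻¹ := by
    rw [hHB]
    calc ‖(1 : 𝓗 →L[ℂ] 𝓗) + z • Ring.inverse B‖
        ≤ ‖(1 : 𝓗 →L[ℂ] 𝓗)‖ + ‖z • Ring.inverse B‖ := norm_add_le _ _
      _ ≤ 1 + |z| * (1 + γ₀ - z)⁻¹ := by
          refine add_le_add ContinuousLinearMap.norm_id_le ?_
          rw [norm_smul, Real.norm_eq_abs]
          exact mul_le_mul_of_nonneg_left hBnorm (abs_nonneg z)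
  have hcoef : 1 + |z| * (1 + γ₀ - z)⁻¹ ≤ (3 * γ₀ + 1) / γ₀ := by
    have hinv : (1 + γ₀ - z)⁻¹ ≤ γ₀⁻¹ := by
      apply inv_anti₀ hγ₀; linarith
    rcases abs_cases z with ⟨habs, hz0⟩ | ⟨habs, hz0⟩
    · -- 0 ≤ z < 1
      rw [habs]
      have h1 : z * (1 + γ₀ - z)⁻¹ ≤ 1 * γ₀⁻¹ :=
        mul_le_mul (le_of_lt hz) hinv (by positivity) zero_le_one
      rw [one_mul] at h1
      rw [div_eq_mul_inv, add_mul]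
      have h2 : 3 * γ₀ * γ₀⁻¹ = 3 := by
        rw [mul_assoc, mul_inv_cancel₀ (ne_of_gt hγ₀)]; ring
      linarith [h1, h2]
    · -- z < 0
      rw [habs]
      have h1 : -z * (1 + γ₀ - z)⁻¹ ≤ 1 := by
        have ha : -z ≤ 1 + γ₀ - z := by linarith
        calc -z * (1 + γ₀ - z)⁻¹ ≤ (1 + γ₀ - z) * (1 + γ₀ - z)⁻¹ :=
              mul_le_mul_of_nonneg_right ha (le_of_lt (inv_pos.mpr hmB))
          _ = 1 := mul_inv_cancel₀ (ne_of_gt hmB)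
      rw [div_eq_mul_inv, add_mul]
      have h2 : 3 * γ₀ * γ₀⁻¹ = 3 := by
        rw [mul_assoc, mul_inv_cancel₀ (ne_of_gt hγ₀)]; ring
      have h3 : (0:ℝ) < 1 * γ₀⁻¹ := by positivity
      linarith
  calc ‖H₁ * Ring.inverse B‖
      = ‖(H₁ * Ring.inverse H₀) * (H₀ * Ring.inverse B)‖ := by rw [hkey]
    _ ≤ ‖H₁ * Ring.inverse H₀‖ * ‖H₀ * Ring.inverse B‖ := norm_mul_le _ _
    _ ≤ ‖H₁ * Ring.inverse H₀‖ * (1 + |z| * (1 + γ₀ - z)⁻¹) :=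
        mul_le_mul_of_nonneg_left hnormHB (norm_nonneg _)
    _ ≤ ‖H₁ * Ring.inverse H₀‖ * ((3 * γ₀ + 1) / γ₀) :=
        mul_le_mul_of_nonneg_left hcoef (norm_nonneg _)
    _ = ((3 * γ₀ + 1) / γ₀) * ‖H₁ * Ring.inverse H₀‖ := mul_comm _ _
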